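/- arXiv:2406.01802 — 3 statements merged into one kernel-verified Lean document; each statement's English description precedes it below -/
import Mathlib

section
/- Let ψ1 and ψ2 be functions defined on hybrid time domains, with dom ψ1 compact. Then the domain of their concatenation ψ = ψ1|ψ2, namely dom ψ = dom ψ1 ∪ (dom ψ2 + {(T,J)}) where (T,J) = max dom ψ1 and + denotes Minkowski sum, is also a hybrid time domain. -/
open MeasureTheory Set Metric

noncomputable section

/-- A hybrid time domain: a subset of `ℝ≥0 × ℕ` such that, for each `(T, J)` in it,
its intersection with `[0,T] × {0,…,J}` is a finite union `⋃_{j=0}^{J} [t_j, t_{j+1}] × {j}`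
for some nondecreasing finite sequence `0 = t_0 ≤ t_1 ≤ ⋯ ≤ t_{J+1} = T`. -/
def IsHybridTimeDomain (E : Set (ℝ × ℕ)) : Prop :=
  (∀ p ∈ E, 0 ≤ p.1) ∧
  ∀ p ∈ E, ∃ t : ℕ → ℝ, t 0 = 0 ∧ t (p.2 + 1) = p.1 ∧
    (∀ j, j ≤ p.2 → t j ≤ t (j + 1)) ∧
    E ∩ (Set.Icc (0 : ℝ) p.1 ×ˢ {j : ℕ | j ≤ p.2}) =
      ⋃ j ∈ Set.Iic p.2, Set.Icc (t j) (t (j + 1)) ×ˢ ({j} : Set ℕ)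

/-- `(T, J)` is the maximal element of the hybrid time domain `E`. -/
def IsMaxOfDomain (E : Set (ℝ × ℕ)) (T : ℝ) (J : ℕ) : Prop :=
  (T, J) ∈ E ∧ ∀ p ∈ E, p.1 ≤ T ∧ p.2 ≤ J

/-- The domain of the concatenation: `E1 ∪ (E2 + {(T, J)})` (Minkowski sum). -/
def ConcatDom (T : ℝ) (J : ℕ) (E1 E2 : Set (ℝ × ℕ)) : Set (ℝ × ℕ) :=
  E1 ∪ (fun p : ℝ × ℕ => (p.1 + T, p.2 + J)) '' E2

/-- `f` is the concatenation of `f2` to `f1` (with `(T, J) = max dom f1`):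
`f = f1` on `E1 \ {(T,J)}`, and `f (t + T, j + J) = f2 (t, j)` on `E2`. -/
def IsConcatOf {Y : Type*} (T : ℝ) (J : ℕ) (E1 E2 : Set (ℝ × ℕ))
    (f1 f2 f : ℝ × ℕ → Y) : Prop :=
  (∀ p ∈ E1, p ≠ (T, J) → f p = f1 p) ∧
  (∀ p ∈ E2, f (p.1 + T, p.2 + J) = f2 p)

/-- The `j`-th time slice `I^j_E = {t : (t, j) ∈ E}` of a hybrid time domain. -/
def Slice (E : Set (ℝ × ℕ)) (j : ℕ) : Set ℝ := {t : ℝ | (t, j) ∈ E}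

/-- `t ↦ υ (t, j)` is (Lebesgue) measurable on the slice `I^j_E`. -/
def MeasurableOnSlice {Y : Type*} [MeasurableSpace Y]
    (υ : ℝ × ℕ → Y) (E : Set (ℝ × ℕ)) (j : ℕ) : Prop :=
  Measurable ((Slice E j).restrict fun t => υ (t, j))

/-- `t ↦ υ (t, j)` is locally essentially bounded on the slice `I^j_E`: every point of the
slice has an open neighborhood on which the function is bounded almost everywhere. -/
def LocEssBddOnSlice {Y : Type*} [NormedAddCommGroup Y]
    (υ : ℝ × ℕ → Y) (E : Set (ℝ × ℕ)) (j : ℕ) : Prop :=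
  ∀ r ∈ Slice E j, ∃ U : Set ℝ, IsOpen U ∧ r ∈ U ∧ ∃ c : ℝ, 0 ≤ c ∧
    ∀ᵐ t ∂(volume : Measure ℝ), t ∈ U ∩ Slice E j → ‖υ (t, j)‖ ≤ c

/-- A hybrid input: defined on a hybrid time domain, with each slice function Lebesgue
measurable and locally essentially bounded. -/
def IsHybridInput {Y : Type*} [MeasurableSpace Y] [NormedAddCommGroup Y]
    (υ : ℝ × ℕ → Y) (E : Set (ℝ × ℕ)) : Prop :=
  IsHybridTimeDomain E ∧
  ∀ j : ℕ, MeasurableOnSlice υ E j ∧ LocEssBddOnSlice υ E j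

/-- `f` is absolutely continuous on `[a, b]` in the ε–δ sense: for every `ε > 0` there is
`δ > 0` such that every countable collection of disjoint subintervals `[u k, v k]` of `[a,b]`
of total length at most `δ` satisfies `Σ ‖f (v k) - f (u k)‖ ≤ ε`. -/
def AbsContOnIcc {Y : Type*} [NormedAddCommGroup Y] (f : ℝ → Y) (a b : ℝ) : Prop :=
  ∀ ε > (0 : ℝ), ∃ δ > (0 : ℝ), ∀ u v : ℕ → ℝ,
    (∀ k, a ≤ u k ∧ u k ≤ v k ∧ v k ≤ b) →
    (Pairwise fun k l => Disjoint (Set.Ioo (u k) (v k)) (Set.Ioo (u l) (v l))) →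
    (∀ s : Finset ℕ, ∑ k ∈ s, (v k - u k) ≤ δ) →
    ∀ s : Finset ℕ, ∑ k ∈ s, ‖f (v k) - f (u k)‖ ≤ ε

/-- `f` is locally absolutely continuous on the set `I`: it is absolutely continuous on
every compact subinterval of `I`. -/
def LocAbsContOn {Y : Type*} [NormedAddCommGroup Y] (f : ℝ → Y) (I : Set ℝ) : Prop :=
  ∀ a b : ℝ, a ≤ b → Set.Icc a b ⊆ I → AbsContOnIcc f a b

/-- A hybrid arc: defined on a hybrid time domain, with each slice function locally
absolutely continuous. -/
def IsHybridArc {Y : Type*} [NormedAddCommGroup Y]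
    (φ : ℝ × ℕ → Y) (E : Set (ℝ × ℕ)) : Prop :=
  IsHybridTimeDomain E ∧
  ∀ j : ℕ, LocAbsContOn (fun t => φ (t, j)) (Slice E j)

/-- `(φ, υ)` with common domain `E` is a solution pair to the hybrid system
`H = (C, f, D, g)`. -/
def IsSolutionPair {X U : Type*} [NormedAddCommGroup X] [NormedSpace ℝ X]
    [NormedAddCommGroup U] [MeasurableSpace U]
    (C : Set (X × U)) (f : X × U → X) (D : Set (X × U)) (g : X × U → X)
    (φ : ℝ × ℕ → X) (υ : ℝ × ℕ → U) (E : Set (ℝ × ℕ)) : Prop :=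
  IsHybridArc φ E ∧ IsHybridInput υ E ∧
  (φ (0, 0), υ (0, 0)) ∈ closure C ∪ D ∧
  (∀ j : ℕ, (interior (Slice E j)).Nonempty →
    (∀ t ∈ interior (Slice E j), (φ (t, j), υ (t, j)) ∈ C) ∧
    ∀ᵐ t ∂(volume : Measure ℝ), t ∈ Slice E j →
      HasDerivAt (fun s => φ (s, j)) (f (φ (t, j), υ (t, j))) t) ∧
  ∀ (t : ℝ) (j : ℕ), (t, j) ∈ E → (t, j + 1) ∈ E →
    (φ (t, j), υ (t, j)) ∈ D ∧ φ (t, j + 1) = g (φ (t, j), υ (t, j))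

/-- `(φ, υ)` with domain `E` is a motion plan to the motion planning problem
`P = (X0, Xf, Xu, (C, f, D, g))`. -/
def IsMotionPlan {X U : Type*} [NormedAddCommGroup X] [NormedSpace ℝ X]
    [NormedAddCommGroup U] [MeasurableSpace U]
    (X0 Xf : Set X) (Xu : Set (X × U))
    (C : Set (X × U)) (f : X × U → X) (D : Set (X × U)) (g : X × U → X)
    (φ : ℝ × ℕ → X) (υ : ℝ × ℕ → U) (E : Set (ℝ × ℕ)) : Prop :=
  IsSolutionPair C f D g φ υ E ∧ φ (0, 0) ∈ X0 ∧
  ∃ (T : ℝ) (J : ℕ), (T, J) ∈ E ∧ φ (T, J) ∈ Xf ∧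
    ∀ (t : ℝ) (j : ℕ), (t, j) ∈ E → t + (j : ℝ) ≤ T + (J : ℝ) →
      (φ (t, j), υ (t, j)) ∉ Xu

/-- Truncation of a hybrid time domain up to hybrid time `(T, J)`. -/
def TruncDom (E : Set (ℝ × ℕ)) (T : ℝ) (J : ℕ) : Set (ℝ × ℕ) :=
  E ∩ (Set.Icc (0 : ℝ) T ×ˢ {j : ℕ | j ≤ J})

/-- The `δ`-inflation of a set `S ⊆ X × U`:
`{(x,u) : ∃ (y,v) ∈ S, x ∈ y + δB, u ∈ v + δB}` with `B` the closed unit ball. -/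
def Inflate {X U : Type*} [NormedAddCommGroup X] [NormedAddCommGroup U]
    (S : Set (X × U)) (δ : ℝ) : Set (X × U) :=
  {p | ∃ q ∈ S, ‖p.1 - q.1‖ ≤ δ ∧ ‖p.2 - q.2‖ ≤ δ}

/-- `δs` is a safety clearance of the motion plan `(φ, υ)` (with `(T,J) = max dom`). -/
def HasSafetyClearance {X U : Type*} [NormedAddCommGroup X] [NormedAddCommGroup U]
    (X0 Xf : Set X) (Xu : Set (X × U))
    (φ : ℝ × ℕ → X) (υ : ℝ × ℕ → U) (E : Set (ℝ × ℕ)) (T : ℝ) (J : ℕ)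
    (δs : ℝ) : Prop :=
  0 < δs ∧ ∀ δ' ∈ Set.Icc (0 : ℝ) δs,
    closedBall (φ (0, 0)) δ' ⊆ X0 ∧
    closedBall (φ (T, J)) δ' ⊆ Xf ∧
    ∀ p ∈ E, Disjoint (closedBall (φ p) δ' ×ˢ closedBall (υ p) δ') Xu

/-- `δd` is a dynamics clearance of the motion plan `(φ, υ)` relative to flow set `C`
and jump set `D`. -/
def HasDynamicsClearance {X U : Type*} [NormedAddCommGroup X] [NormedAddCommGroup U]
    (C D : Set (X × U))
    (φ : ℝ × ℕ → X) (υ : ℝ × ℕ → U) (E : Set (ℝ × ℕ)) (δd : ℝ) : Prop :=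
  0 < δd ∧ ∀ δ' ∈ Set.Icc (0 : ℝ) δd,
    (∀ p ∈ E, (interior (Slice E p.2)).Nonempty →
      closedBall (φ p) δ' ×ˢ closedBall (υ p) δ' ⊆ C) ∧
    ∀ p : ℝ × ℕ, p ∈ E → (p.1, p.2 + 1) ∈ E →
      closedBall (φ p) δ' ×ˢ closedBall (υ p) δ' ⊆ D

/-- The hybrid time domain `E` is purely continuous: nontrivial and contained in `ℝ≥0 × {0}`. -/
def IsPurelyContinuous (E : Set (ℝ × ℕ)) : Prop :=
  E.Nontrivial ∧ E ⊆ {p : ℝ × ℕ | p.2 = 0}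

/-- The hybrid time domain `E` is purely discrete: nontrivial and contained in `{0} × ℕ`. -/
def IsPurelyDiscrete (E : Set (ℝ × ℕ)) : Prop :=
  E.Nontrivial ∧ E ⊆ {p : ℝ × ℕ | p.1 = 0}

/-- Two hybrid arcs are `(τ, ε)`-close. -/
def CloseArcs {Y : Type*} [NormedAddCommGroup Y] (τ ε : ℝ)
    (φ1 : ℝ × ℕ → Y) (E1 : Set (ℝ × ℕ)) (φ2 : ℝ × ℕ → Y) (E2 : Set (ℝ × ℕ)) : Prop :=
  (∀ p ∈ E1, p.1 + (p.2 : ℝ) ≤ τ →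
    ∃ s : ℝ, (s, p.2) ∈ E2 ∧ |p.1 - s| < ε ∧ ‖φ1 p - φ2 (s, p.2)‖ < ε) ∧
  (∀ p ∈ E2, p.1 + (p.2 : ℝ) ≤ τ →
    ∃ s : ℝ, (s, p.2) ∈ E1 ∧ |p.1 - s| < ε ∧ ‖φ2 p - φ1 (s, p.2)‖ < ε)

/-- the domain of the concatenation of two functions defined on hybrid time
domains (the first compact) is again a hybrid time domain. -/
theorem concatDom_isHybridTimeDomain
    {E1 E2 : Set (ℝ × ℕ)}
    (h1 : IsHybridTimeDomain E1) (h2 : IsHybridTimeDomain E2)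
    (hcompact : IsCompact E1)
    {T : ℝ} {J : ℕ} (hmax : IsMaxOfDomain E1 T J) :
    IsHybridTimeDomain (ConcatDom T J E1 E2) := by
  obtain ⟨h1nn, h1seq⟩ := h1
  obtain ⟨h2nn, h2seq⟩ := h2
  obtain ⟨hTJ, hmaxle⟩ := hmax
  have hT0 : 0 ≤ T := h1nn (T, J) hTJ
  refine ⟨?_, ?_⟩
  · rintro p (hp | ⟨y, hy, rfl⟩)
    · exact h1nn p hp
    · exact add_nonneg (h2nn y hy) hT0
  rintro p (hp | ⟨q, hq, rfl⟩)
  · -- p ∈ E1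
    obtain ⟨t, ht0, htend, hmono, heq⟩ := h1seq p hp
    obtain ⟨hp1, hp2⟩ := hmaxle p hp
    refine ⟨t, ht0, htend, hmono, ?_⟩
    rw [← heq]
    ext x
    simp only [Set.mem_inter_iff, Set.mem_prod, Set.mem_Icc, Set.mem_setOf_eq, ConcatDom,
      Set.mem_union, Set.mem_image]
    constructor
    · rintro ⟨(hx | ⟨y, hy, rfl⟩), hbox⟩
      · exact ⟨hx, hbox⟩
      · obtain ⟨⟨hx0, hx1⟩, hx2⟩ := hbox
        dsimp only at hx0 hx1 hx2
        have hy1 : y.1 = 0 := le_antisymm (by linarith) (h2nn y hy)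
        have hy2 : y.2 = 0 := by omega
        have hxe : (y.1 + T, y.2 + J) = ((T : ℝ), J) := by
          simp [hy1, hy2]
        have hx1' : T ≤ p.1 := by rw [hy1] at hx1; linarith
        have hx2' : J ≤ p.2 := by omega
        rw [hxe]
        exact ⟨hTJ, ⟨hT0, hx1'⟩, hx2'⟩
    · rintro ⟨hx, hbox⟩
      exact ⟨Or.inl hx, hbox⟩
  · -- p = (q.1 + T, q.2 + J), q ∈ E2
    obtain ⟨s, j⟩ := q
    simp only at hq ⊢
    obtain ⟨t1, ht10, ht1end, hmono1, heq1⟩ := h1seq (T, J) hTJ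
    obtain ⟨t2, ht20, ht2end, hmono2, heq2⟩ := h2seq (s, j) hq
    simp only at ht10 ht1end hmono1 heq1 ht20 ht2end hmono2 heq2
    have hs0 : 0 ≤ s := h2nn (s, j) hq
    have ht21 : 0 ≤ t2 1 := by
      have := hmono2 0 (Nat.zero_le j)
      rw [ht20] at this; exact this
    have ht1J : t1 J ≤ T := by
      have := hmono1 J le_rfl
      rw [ht1end] at this; exact this
    refine ⟨fun m => if m ≤ J then t1 m else T + t2 (m - J), ?_, ?_, ?_, ?_⟩
    · simp [Nat.zero_le, ht10]
    · have h : ¬ (j + J + 1 ≤ J) := by omega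
      simp only [h, if_false]
      have h2' : j + J + 1 - J = j + 1 := by omega
      rw [h2', ht2end]; ring
    · intro m hm
      by_cases h1' : m + 1 ≤ J
      · have h0 : m ≤ J := by omega
        simp only [h0, h1', if_true]
        exact hmono1 m (by omega)
      · by_cases h0 : m ≤ J
        · have hmJ : m = J := by omega
          simp only [h0, h1', if_true, if_false]
          have : m + 1 - J = 1 := by omega
          rw [this, hmJ]
          linarith
        · simp only [h0, h1', if_false]
          have e1 : m + 1 - J = (m - J) + 1 := by omega
          rw [e1]
          have := hmono2 (m - J) (by omega)
          linarith
    · ext x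
      simp only [Set.mem_inter_iff, Set.mem_prod, Set.mem_Icc, Set.mem_setOf_eq, ConcatDom,
        Set.mem_union, Set.mem_image, Set.mem_iUnion, Set.mem_Iic, Set.mem_singleton_iff,
        exists_prop]
      constructor
      · rintro ⟨(hx | ⟨y, hy, rfl⟩), hbox⟩
        · -- x ∈ E1
          obtain ⟨hle1, hle2⟩ := hmaxle x hx
          have hx' : x ∈ E1 ∩ (Set.Icc (0 : ℝ) T ×ˢ {k : ℕ | k ≤ J}) :=
            ⟨hx, ⟨hbox.1.1, hle1⟩, by simp only [Set.mem_setOf_eq]; exact hle2⟩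
          rw [heq1] at hx'
          simp only [Set.mem_iUnion, Set.mem_Iic, Set.mem_prod, Set.mem_Icc,
            Set.mem_singleton_iff, exists_prop] at hx'
          obtain ⟨k, hk, ⟨hxa, hxb⟩, hxk⟩ := hx'
          refine ⟨k, by omega, ⟨?_, ?_⟩, hxk⟩
          · simp only [hk, if_true]; exact hxa
          · by_cases hk1 : k + 1 ≤ J
            · simp only [hk1, if_true]; exact hxb
            · have hkJ : k = J := by omega
              simp only [hk1, if_false]
              have : k + 1 - J = 1 := by omega
              rw [this]
              rw [hkJ, ht1end] at hxb
              linarith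
        · -- x = (y.1 + T, y.2 + J)
          obtain ⟨⟨hx0, hx1⟩, hx2⟩ := hbox
          dsimp only at hx0 hx1 hx2
          have hy' : y ∈ E2 ∩ (Set.Icc (0 : ℝ) s ×ˢ {k : ℕ | k ≤ j}) :=
            ⟨hy, ⟨h2nn y hy, by linarith⟩, by simp only [Set.mem_setOf_eq]; omega⟩
          rw [heq2] at hy'
          simp only [Set.mem_iUnion, Set.mem_Iic, Set.mem_prod, Set.mem_Icc,
            Set.mem_singleton_iff, exists_prop] at hy'
          obtain ⟨k, hk, ⟨hya, hyb⟩, hyk⟩ := hy'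
          refine ⟨k + J, by omega, ⟨?_, ?_⟩, by omega⟩
          · by_cases hk0 : k = 0
            · have hle : k + J ≤ J := by omega
              simp only [hle, if_true]
              subst hk0
              rw [ht20] at hya
              calc t1 (0 + J) = t1 J := by norm_num
                _ ≤ T := ht1J
                _ ≤ y.1 + T := by linarith
            · have hle : ¬ (k + J ≤ J) := by omega
              simp only [hle, if_false]
              have : k + J - J = k := by omega
              rw [this]
              linarith
          · have hle : ¬ (k + J + 1 ≤ J) := by omega
            simp only [hle, if_false]
            have : k + J + 1 - J = k + 1 := by omega
            rw [this]
            linarith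
      · rintro ⟨m, hm, ⟨hxa, hxb⟩, hxm⟩
        by_cases hmJ : m ≤ J
        · by_cases hx1T : x.1 ≤ T
          · -- x ∈ E1 part
            simp only [hmJ, if_true] at hxa
            have hxb' : x.1 ≤ t1 (m + 1) := by
              by_cases hm1 : m + 1 ≤ J
              · simp only [hm1, if_true] at hxb; exact hxb
              · have : m = J := by omega
                rw [this, ht1end]; exact hx1T
            have hx' : x ∈ ⋃ k ∈ Set.Iic J, Set.Icc (t1 k) (t1 (k + 1)) ×ˢ ({k} : Set ℕ) := by
              simp only [Set.mem_iUnion, Set.mem_Iic, Set.mem_prod, Set.mem_Icc,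
                Set.mem_singleton_iff, exists_prop]
              exact ⟨m, hmJ, ⟨hxa, hxb'⟩, hxm⟩
            rw [← heq1] at hx'
            obtain ⟨hxE1, ⟨hx0, _⟩, _⟩ := hx'
            exact ⟨Or.inl hxE1, ⟨hx0, by linarith⟩, by omega⟩
          · -- x.1 > T, m = J, from shifted E2 slice 0
            push_neg at hx1T
            have hmJ' : m = J := by
              by_contra hne
              have hm1 : m + 1 ≤ J := by omega
              simp only [hm1, (show m ≤ J by omega), if_true] at hxb
              have := hmono1 (m + 1)
              -- x.1 ≤ t1 (m+1) ≤ ... ≤ t1 (J+1) = T, contradiction with T < x.1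
              have hchain : ∀ k, k ≤ J + 1 → t1 k ≤ T := by
                intro k hk
                have : ∀ i, t1 (J + 1 - i) ≤ T := by
                  intro i
                  induction i with
                  | zero => simp [ht1end]
                  | succ n ih =>
                    by_cases hn : n < J + 1
                    · have e : J + 1 - (n + 1) + 1 = J + 1 - n := by omega
                      have := hmono1 (J + 1 - (n + 1)) (by omega)
                      rw [e] at this
                      linarith [ih]
                    · have e : J + 1 - (n + 1) = J + 1 - n := by omega
                      rw [e]; exact ih
                have := this (J + 1 - k)
                rwa [Nat.sub_sub_self hk] at this
              have := hchain (m + 1) (by omega)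
              linarith
            subst hmJ'
            have hmm : ¬ (m + 1 ≤ m) := by omega
            simp only [hmm, if_false] at hxb
            have hsub : m + 1 - m = 1 := by omega
            rw [hsub] at hxb
            have hy' : (x.1 - T, 0) ∈ ⋃ k ∈ Set.Iic j,
                Set.Icc (t2 k) (t2 (k + 1)) ×ˢ ({k} : Set ℕ) := by
              simp only [Set.mem_iUnion, Set.mem_Iic, Set.mem_prod, Set.mem_Icc,
                Set.mem_singleton_iff, exists_prop]
              exact ⟨0, Nat.zero_le j, ⟨by rw [ht20]; linarith, by linarith⟩, rfl⟩
            rw [← heq2] at hy'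
            obtain ⟨hyE2, ⟨_, hy1⟩, _⟩ := hy'
            refine ⟨Or.inr ⟨(x.1 - T, 0), hyE2, ?_⟩, ⟨by linarith, by simp at hy1; linarith⟩,
              by omega⟩
            have : x = (x.1, x.2) := rfl
            rw [this, hxm]
            simp
        · -- m > J, shifted E2 slice m - J
          push_neg at hmJ
          simp only [not_le.mpr hmJ, (show ¬ (m + 1 ≤ J) by omega), if_false] at hxa hxb
          have hsub : m + 1 - J = (m - J) + 1 := by omega
          rw [hsub] at hxb
          have hy' : (x.1 - T, m - J) ∈ ⋃ k ∈ Set.Iic j,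
              Set.Icc (t2 k) (t2 (k + 1)) ×ˢ ({k} : Set ℕ) := by
            simp only [Set.mem_iUnion, Set.mem_Iic, Set.mem_prod, Set.mem_Icc,
              Set.mem_singleton_iff, exists_prop]
            exact ⟨m - J, by omega, ⟨by linarith, by linarith⟩, rfl⟩
          rw [← heq2] at hy'
          obtain ⟨hyE2, ⟨hy0, hy1⟩, _⟩ := hy'
          simp only [Set.mem_Icc] at hy0 hy1
          refine ⟨Or.inr ⟨(x.1 - T, m - J), hyE2, ?_⟩, ⟨by linarith, by linarith⟩, by omega⟩
          have : x = (x.1, x.2) := rfl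
          rw [this, hxm]
          simp only [Prod.mk.injEq]
          constructor
          · ring
          · omega
end
end

section
/- Let υ1 and υ2 be hybrid inputs with dom υ1 compact. Then their concatenation υ = υ1|υ2 is also a hybrid input. -/
open MeasureTheory Set Metric

noncomputable section

section AuxConcat

open MeasureTheory Set

variable {Y : Type*} [MeasurableSpace Y]

lemma restrictMeas_mono {S S' : Set ℝ} {f : ℝ → Y} (hsub : S' ⊆ S)
    (hf : Measurable (S.restrict f)) : Measurable (S'.restrict f) := by
  have h : S'.restrict f = S.restrict f ∘ (fun x : S' => (⟨(x : ℝ), hsub x.2⟩ : S)) := rfl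
  rw [h]
  exact hf.comp (measurable_subtype_coe.subtype_mk)

lemma restrictMeas_congr {S : Set ℝ} {f g : ℝ → Y}
    (h : ∀ t ∈ S, f t = g t) (hf : Measurable (S.restrict f)) :
    Measurable (S.restrict g) := by
  have he : S.restrict g = S.restrict f := by
    funext x; exact (h x x.2).symm
  rw [he]; exact hf

lemma restrictMeas_union {S1 S2 : Set ℝ} (h1 : MeasurableSet S1) (h2 : MeasurableSet S2)
    {f : ℝ → Y} (hf1 : Measurable (S1.restrict f)) (hf2 : Measurable (S2.restrict f)) :
    Measurable ((S1 ∪ S2).restrict f) := by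
  intro A hA
  have key : ∀ (S : Set ℝ), MeasurableSet S → Measurable (S.restrict f) →
      MeasurableSet (S ∩ f ⁻¹' A) := by
    intro S hS hfS
    have h' : Subtype.val '' ((S.restrict f) ⁻¹' A) = S ∩ f ⁻¹' A := by
      ext x
      simp only [Set.mem_image, Set.mem_inter_iff, Set.mem_preimage]
      constructor
      · rintro ⟨⟨y, hy⟩, hyA, rfl⟩; exact ⟨hy, hyA⟩
      · rintro ⟨hx, hxA⟩; exact ⟨⟨x, hx⟩, hxA, rfl⟩
    rw [← h']
    exact MeasurableSet.subtype_image hS (hfS hA)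
  have hB := (key S1 h1 hf1).union (key S2 h2 hf2)
  have heq : ((S1 ∪ S2).restrict f) ⁻¹' A
      = Subtype.val ⁻¹' ((S1 ∩ f ⁻¹' A) ∪ (S2 ∩ f ⁻¹' A)) := by
    ext ⟨x, hx⟩
    simp only [Set.mem_preimage, Set.restrict_apply, Set.mem_union, Set.mem_inter_iff]
    rcases hx with hx | hx
    · constructor
      · intro h; exact Or.inl ⟨hx, h⟩
      · rintro (⟨_, h⟩ | ⟨_, h⟩) <;> exact h
    · constructor
      · intro h; exact Or.inr ⟨hx, h⟩
      · rintro (⟨_, h⟩ | ⟨_, h⟩) <;> exact h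
  rw [heq]
  exact measurable_subtype_coe hB

lemma restrictMeas_translate {S : Set ℝ} {f : ℝ → Y} (T : ℝ)
    (hf : Measurable (S.restrict f)) :
    Measurable ({t : ℝ | t - T ∈ S}.restrict (fun t => f (t - T))) := by
  have h : {t : ℝ | t - T ∈ S}.restrict (fun t => f (t - T))
      = S.restrict f ∘ (fun x : {t : ℝ | t - T ∈ S} => (⟨(x : ℝ) - T, x.2⟩ : S)) := rfl
  rw [h]
  exact hf.comp ((measurable_subtype_coe.sub measurable_const).subtype_mk)

lemma restrictMeas_subsingleton {S : Set ℝ} (hS : S.Subsingleton) (f : ℝ → Y) :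
    Measurable (S.restrict f) := by
  haveI : Subsingleton S := hS.coe_sort
  exact Subsingleton.measurable

lemma chain_mono' {t : ℕ → ℝ} {n : ℕ} (h : ∀ k ≤ n, t k ≤ t (k + 1)) :
    ∀ a b, a ≤ b → b ≤ n + 1 → t a ≤ t b := by
  intro a b hab hbn
  induction b with
  | zero => simp [Nat.le_zero.mp hab]
  | succ b ih =>
    rcases Nat.lt_or_ge a (b + 1) with h' | h'
    · exact le_trans (ih (Nat.lt_succ_iff.mp h') (le_trans (Nat.le_succ b) hbn))
        (h b (Nat.succ_le_succ_iff.mp hbn))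
    · have : a = b + 1 := le_antisymm hab h'
      simp [this]

lemma ae_translate {P : ℝ → Prop} (T : ℝ)
    (h : ∀ᵐ s ∂(volume : Measure ℝ), P s) :
    ∀ᵐ t ∂(volume : Measure ℝ), P (t - T) := by
  rw [ae_iff] at h ⊢
  have heq : {t : ℝ | ¬ P (t - T)} = (fun t : ℝ => t + (-T)) ⁻¹' {s | ¬ P s} := by
    ext t; simp [sub_eq_add_neg]
  rw [heq, measure_preimage_add_right]
  exact h

end AuxConcat
section HTDLemmas

lemma htd_mem_zero {E : Set (ℝ × ℕ)} (hE : IsHybridTimeDomain E) {p : ℝ × ℕ} (hp : p ∈ E) :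
    ((0 : ℝ), (0 : ℕ)) ∈ E := by
  obtain ⟨t, h0, hT, hmono, heq⟩ := hE.2 p hp
  have hmem : ((0:ℝ), (0:ℕ)) ∈ ⋃ j ∈ Set.Iic p.2, Set.Icc (t j) (t (j+1)) ×ˢ ({j} : Set ℕ) := by
    refine Set.mem_biUnion (Set.mem_Iic.mpr (Nat.zero_le _)) ?_
    refine ⟨?_, rfl⟩
    rw [Set.mem_Icc, h0]
    exact ⟨le_refl _, h0 ▸ hmono 0 (Nat.zero_le _)⟩
  rw [← heq] at hmem
  exact hmem.1

lemma htd_slice_ordConnected {E : Set (ℝ × ℕ)} (hE : IsHybridTimeDomain E) (j : ℕ) :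
    (Slice E j).OrdConnected := by
  constructor
  intro a ha b hb c hc
  obtain ⟨t, h0, hT, hmono, heq⟩ := hE.2 (b, j) hb
  have hab : ((a, j) : ℝ × ℕ) ∈ E ∩ (Set.Icc (0:ℝ) b ×ˢ {i : ℕ | i ≤ j}) :=
    ⟨ha, ⟨⟨hE.1 _ ha, le_trans hc.1 hc.2⟩, le_refl j⟩⟩
  rw [heq] at hab
  simp only [Set.mem_iUnion, Set.mem_prod, Set.mem_Icc, Set.mem_singleton_iff,
    Set.mem_Iic, exists_prop] at hab
  obtain ⟨i, hij, ⟨hta, hat⟩, hji⟩ := hab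
  subst hji
  have hcm : ((c, j) : ℝ × ℕ) ∈ ⋃ i ∈ Set.Iic j, Set.Icc (t i) (t (i+1)) ×ˢ ({i} : Set ℕ) := by
    refine Set.mem_biUnion (Set.mem_Iic.mpr (le_refl j)) ?_
    exact ⟨⟨le_trans hta hc.1, hT ▸ hc.2⟩, rfl⟩
  rw [← heq] at hcm
  exact hcm.1

lemma htd_slice_min {E : Set (ℝ × ℕ)} (hE : IsHybridTimeDomain E) {a : ℝ} {m : ℕ}
    (ha : (a, m) ∈ E) : ∃ b, (b, m) ∈ E ∧ ∀ u, (u, m) ∈ E → b ≤ u := by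
  obtain ⟨t, h0, hT, hmono, heq⟩ := hE.2 (a, m) ha
  have key : ∀ u, (u, m) ∈ E → u ≤ a → t m ≤ u := by
    intro u hu hua
    have hmem : ((u, m) : ℝ × ℕ) ∈ E ∩ (Set.Icc (0:ℝ) a ×ˢ {i : ℕ | i ≤ m}) :=
      ⟨hu, ⟨⟨hE.1 _ hu, hua⟩, le_refl m⟩⟩
    rw [heq] at hmem
    simp only [Set.mem_iUnion, Set.mem_prod, Set.mem_Icc, Set.mem_singleton_iff,
      Set.mem_Iic, exists_prop] at hmem
    obtain ⟨i, him, ⟨h1, h2⟩, hmi⟩ := hmem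
    subst hmi
    exact h1
  have hma : t m ≤ a := key a ha (le_refl a)
  refine ⟨t m, ?_, ?_⟩
  · have hmem : ((t m, m) : ℝ × ℕ) ∈ ⋃ i ∈ Set.Iic m, Set.Icc (t i) (t (i+1)) ×ˢ ({i} : Set ℕ) := by
      refine Set.mem_biUnion (Set.mem_Iic.mpr (le_refl m)) ?_
      exact ⟨⟨le_refl _, hmono m (le_refl m)⟩, rfl⟩
    rw [← heq] at hmem
    exact hmem.1
  · intro u hu
    rcases le_or_gt u a with h | h
    · exact key u hu h
    · exact le_trans hma h.le

end HTDLemmas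
lemma concat_slice_eq {E1 E2 : Set (ℝ × ℕ)} {T : ℝ} {J : ℕ} (j : ℕ) :
    Slice (ConcatDom T J E1 E2) j =
      Slice E1 j ∪ {r : ℝ | J ≤ j ∧ (r - T, j - J) ∈ E2} := by
  ext r
  simp only [Slice, ConcatDom, Set.mem_union, Set.mem_setOf_eq, Set.mem_image]
  constructor
  · rintro (h | ⟨⟨b, m⟩, hb, heq⟩)
    · exact Or.inl h
    · rw [Prod.mk.injEq] at heq
      obtain ⟨h1', h2'⟩ := heq
      refine Or.inr ⟨by omega, ?_⟩
      have hr : r - T = b := by linarith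
      have hj : j - J = m := by omega
      rw [hr, hj]; exact hb
  · rintro (h | ⟨hJ, h⟩)
    · exact Or.inl h
    · refine Or.inr ⟨(r - T, j - J), h, ?_⟩
      rw [Prod.mk.injEq]
      exact ⟨by ring, by omega⟩

lemma concat_isHTD {E1 E2 : Set (ℝ × ℕ)} (h1 : IsHybridTimeDomain E1)
    (h2 : IsHybridTimeDomain E2) {T : ℝ} {J : ℕ} (hmax : IsMaxOfDomain E1 T J) :
    IsHybridTimeDomain (ConcatDom T J E1 E2) := by
  obtain ⟨hE1nn, hE1part⟩ := h1
  obtain ⟨hE2nn, hE2part⟩ := h2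
  obtain ⟨hTJ, hmax2⟩ := hmax
  have hT0 : 0 ≤ T := hE1nn (T, J) hTJ
  obtain ⟨t1, ht10, ht1T, ht1mono, ht1eq⟩ := hE1part (T, J) hTJ
  have ht10' : t1 0 = 0 := ht10
  have ht1T' : t1 (J + 1) = T := ht1T
  have ht1eq' : E1 ∩ (Set.Icc (0:ℝ) T ×ˢ {i : ℕ | i ≤ J}) =
      ⋃ i ∈ Set.Iic J, Set.Icc (t1 i) (t1 (i+1)) ×ˢ ({i} : Set ℕ) := ht1eq
  have hE1sub : E1 ⊆ Set.Icc (0:ℝ) T ×ˢ {i : ℕ | i ≤ J} := fun p hp =>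
    ⟨⟨hE1nn p hp, (hmax2 p hp).1⟩, (hmax2 p hp).2⟩
  have hE1eq : E1 = ⋃ i ∈ Set.Iic J, Set.Icc (t1 i) (t1 (i+1)) ×ˢ ({i} : Set ℕ) := by
    rw [← ht1eq']
    exact (Set.inter_eq_self_of_subset_left hE1sub).symm
  have ht1le : ∀ i, i ≤ J + 1 → t1 i ≤ T := fun i hi =>
    ht1T' ▸ chain_mono' ht1mono i (J+1) hi (le_refl _)
  have ht1nn : ∀ i, i ≤ J + 1 → 0 ≤ t1 i := fun i hi =>
    ht10' ▸ chain_mono' ht1mono 0 i (Nat.zero_le _) hi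
  constructor
  · rintro p (hp | ⟨⟨b, m⟩, hb, rfl⟩)
    · exact hE1nn p hp
    · exact add_nonneg (hE2nn _ hb) hT0
  · rintro p (hp | ⟨⟨s, k⟩, hq, rfl⟩)
    · obtain ⟨t, h0, hTp, hmono, heq⟩ := hE1part p hp
      refine ⟨t, h0, hTp, hmono, ?_⟩
      rw [← heq]
      apply Set.Subset.antisymm
      · rintro x ⟨(hx | ⟨⟨b, m⟩, hb, rfl⟩), hbox⟩
        · exact ⟨hx, hbox⟩
        · have hb0 : 0 ≤ b := hE2nn _ hb
          have h1' : b + T ≤ p.1 := hbox.1.2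
          have h2' : m + J ≤ p.2 := hbox.2
          have hpT : p.1 ≤ T := (hmax2 p hp).1
          have hpJ : p.2 ≤ J := (hmax2 p hp).2
          have hbeq : b = 0 := le_antisymm (by linarith) hb0
          have hmeq : m = 0 := by omega
          subst hbeq; subst hmeq
          refine ⟨?_, hbox⟩
          simpa using hTJ
      · rintro x ⟨hx, hbox⟩
        exact ⟨Or.inl hx, hbox⟩
    · obtain ⟨t2, h20, h2s, h2mono, h2eq⟩ := hE2part (s, k) hq
      have h20' : t2 0 = 0 := h20
      have h2s' : t2 (k + 1) = s := h2s
      have h2eq' : E2 ∩ (Set.Icc (0:ℝ) s ×ˢ {i : ℕ | i ≤ k}) =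
          ⋃ i ∈ Set.Iic k, Set.Icc (t2 i) (t2 (i+1)) ×ˢ ({i} : Set ℕ) := h2eq
      have hs0 : 0 ≤ s := hE2nn _ hq
      have ht2nn : ∀ i, i ≤ k + 1 → 0 ≤ t2 i := fun i hi =>
        h20' ▸ chain_mono' h2mono 0 i (Nat.zero_le _) hi
      have ht2le : ∀ i, i ≤ k + 1 → t2 i ≤ s := fun i hi =>
        h2s' ▸ chain_mono' h2mono i (k+1) hi (le_refl _)
      refine ⟨fun i => if i ≤ J then t1 i else t2 (i - J) + T, ?_, ?_, ?_, ?_⟩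
      · show (if 0 ≤ J then t1 0 else _) = 0
        rw [if_pos (Nat.zero_le _)]
        exact ht10'
      · show (if k + J + 1 ≤ J then t1 (k + J + 1) else t2 (k + J + 1 - J) + T) = s + T
        rw [if_neg (by omega), show k + J + 1 - J = k + 1 by omega, h2s']
      · intro i hi
        have hi' : i ≤ k + J := hi
        by_cases hiJ : i + 1 ≤ J
        · show (if i ≤ J then t1 i else _) ≤ (if i + 1 ≤ J then t1 (i+1) else _)
          rw [if_pos (by omega : i ≤ J), if_pos hiJ]
          exact ht1mono i (by omega)
        · by_cases hiJ' : i ≤ J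
          · have hieq : i = J := by omega
            subst hieq
            show (if i ≤ i then t1 i else _) ≤ (if i + 1 ≤ i then _ else t2 (i + 1 - i) + T)
            rw [if_pos le_rfl, if_neg hiJ, show i + 1 - i = 1 by omega]
            have hA : t1 i ≤ T := ht1le i (by omega)
            have hB : 0 ≤ t2 1 := ht2nn 1 (by omega)
            linarith
          · show (if i ≤ J then _ else t2 (i - J) + T) ≤
              (if i + 1 ≤ J then _ else t2 (i + 1 - J) + T)
            rw [if_neg hiJ', if_neg (by omega : ¬ i + 1 ≤ J),
              show i + 1 - J = (i - J) + 1 by omega]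
            have := h2mono (i - J) (by omega)
            linarith
      · apply Set.Subset.antisymm
        · rintro ⟨a, n⟩ ⟨(hx | ⟨⟨b, m⟩, hb, heq2⟩), hbox⟩
          · rw [hE1eq] at hx
            simp only [Set.mem_iUnion, Set.mem_prod, Set.mem_Icc, Set.mem_singleton_iff,
              Set.mem_Iic, exists_prop] at hx
            obtain ⟨i, hiJ, ⟨hlo, hhi⟩, rfl⟩ := hx
            refine Set.mem_biUnion (Set.mem_Iic.mpr (show n ≤ k + J by omega)) ⟨⟨?_, ?_⟩, rfl⟩
            · show (if n ≤ J then t1 n else _) ≤ a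
              rw [if_pos hiJ]; exact hlo
            · show a ≤ (if n + 1 ≤ J then t1 (n + 1) else t2 (n + 1 - J) + T)
              by_cases hi1 : n + 1 ≤ J
              · rw [if_pos hi1]; exact hhi
              · have hieq : n = J := by omega
                rw [if_neg hi1, show n + 1 - J = 1 by omega]
                have hB : 0 ≤ t2 1 := ht2nn 1 (by omega)
                have hhi2 : t1 (n + 1) = T := by rw [hieq]; exact ht1T'
                have hhi' : a ≤ T := hhi2 ▸ hhi
                linarith
          · rw [Prod.mk.injEq] at heq2
            obtain ⟨hba, hmn⟩ := heq2
            have hbbox : a ∈ Set.Icc (0:ℝ) (s + T) := hbox.1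
            have hnk : n ≤ k + J := hbox.2
            have hb0 : 0 ≤ b := hE2nn _ hb
            have hbs : b ≤ s := by
              have h2'' := hbbox.2; linarith
            have hmk : m ≤ k := by omega
            have hbm : ((b, m) : ℝ × ℕ) ∈ E2 ∩ (Set.Icc (0:ℝ) s ×ˢ {i : ℕ | i ≤ k}) :=
              ⟨hb, ⟨⟨hb0, hbs⟩, hmk⟩⟩
            rw [h2eq'] at hbm
            simp only [Set.mem_iUnion, Set.mem_prod, Set.mem_Icc, Set.mem_singleton_iff,
              Set.mem_Iic, exists_prop] at hbm
            obtain ⟨i, hik, ⟨hlo, hhi⟩, rfl⟩ := hbm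
            subst hba; subst hmn
            refine Set.mem_biUnion (Set.mem_Iic.mpr (show m + J ≤ k + J by omega)) ⟨⟨?_, ?_⟩, rfl⟩
            · show (if m + J ≤ J then t1 (m + J) else t2 (m + J - J) + T) ≤ b + T
              by_cases hi0 : m = 0
              · subst hi0
                rw [if_pos (by omega)]
                have hA : t1 (0 + J) ≤ T := ht1le _ (by omega)
                linarith
              · rw [if_neg (by omega), show m + J - J = m by omega]
                linarith
            · show b + T ≤ (if m + J + 1 ≤ J then _ else t2 (m + J + 1 - J) + T)
              rw [if_neg (by omega), show m + J + 1 - J = m + 1 by omega]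
              linarith
        · rintro ⟨a, n⟩ hx
          simp only [Set.mem_iUnion, Set.mem_prod, Set.mem_Icc, Set.mem_singleton_iff,
            Set.mem_Iic, exists_prop] at hx
          obtain ⟨i, hik, ⟨hlo, hhi⟩, rfl⟩ := hx
          by_cases hi1 : n + 1 ≤ J
          · rw [if_pos (show n ≤ J by omega)] at hlo
            rw [if_pos hi1] at hhi
            have hmem : ((a, n) : ℝ × ℕ) ∈ E1 := by
              rw [hE1eq]
              exact Set.mem_biUnion (Set.mem_Iic.mpr (show n ≤ J by omega)) ⟨⟨hlo, hhi⟩, rfl⟩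
            refine ⟨Or.inl hmem, ⟨⟨?_, ?_⟩, ?_⟩⟩
            · show (0:ℝ) ≤ a
              have := ht1nn n (by omega); linarith
            · show a ≤ s + T
              have h1'' := ht1le (n+1) (by omega); linarith
            · show n ≤ k + J; omega
          · by_cases hiJ : n ≤ J
            · have hieq : n = J := by omega
              rw [if_pos hiJ] at hlo
              rw [if_neg hi1, show n + 1 - J = 1 by omega] at hhi
              have hbox2 : (a : ℝ) ∈ Set.Icc (0:ℝ) (s + T) := by
                constructor
                · have := ht1nn n (by omega); linarith
                · have := ht2le 1 (by omega); linarith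
              by_cases haT : a ≤ T
              · have hmem : ((a, n) : ℝ × ℕ) ∈ E1 := by
                  rw [hE1eq]
                  refine Set.mem_biUnion (Set.mem_Iic.mpr (le_of_eq hieq)) ⟨⟨hlo, ?_⟩, rfl⟩
                  rw [show n + 1 = J + 1 by omega, ht1T']; exact haT
                exact ⟨Or.inl hmem, ⟨hbox2, show n ≤ k + J by omega⟩⟩
              · have haT' : T < a := lt_of_not_ge haT
                have hmem : ((a - T, 0) : ℝ × ℕ) ∈ E2 := by
                  have hm2 : ((a - T, 0) : ℝ × ℕ) ∈
                      ⋃ i ∈ Set.Iic k, Set.Icc (t2 i) (t2 (i+1)) ×ˢ ({i} : Set ℕ) := by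
                    refine Set.mem_biUnion (Set.mem_Iic.mpr (Nat.zero_le _)) ⟨⟨?_, ?_⟩, rfl⟩
                    · show t2 0 ≤ a - T
                      rw [h20']; linarith
                    · show a - T ≤ t2 (0 + 1)
                      linarith
                  rw [← h2eq'] at hm2
                  exact hm2.1
                refine ⟨Or.inr ⟨(a - T, 0), hmem, ?_⟩, ⟨hbox2, show n ≤ k + J by omega⟩⟩
                rw [Prod.mk.injEq]
                exact ⟨by ring, by omega⟩
            · rw [if_neg hiJ] at hlo
              rw [if_neg (by omega), show n + 1 - J = (n - J) + 1 by omega] at hhi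
              have him : 1 ≤ n - J ∧ n - J ≤ k := by omega
              have hmem : ((a - T, n - J) : ℝ × ℕ) ∈ E2 := by
                have hm2 : ((a - T, n - J) : ℝ × ℕ) ∈
                    ⋃ m ∈ Set.Iic k, Set.Icc (t2 m) (t2 (m+1)) ×ˢ ({m} : Set ℕ) := by
                  exact Set.mem_biUnion (Set.mem_Iic.mpr him.2)
                    ⟨⟨show t2 (n - J) ≤ a - T by linarith,
                      show a - T ≤ t2 (n - J + 1) by linarith⟩, rfl⟩
                rw [← h2eq'] at hm2
                exact hm2.1
              refine ⟨Or.inr ⟨(a - T, n - J), hmem, ?_⟩, ⟨⟨?_, ?_⟩, ?_⟩⟩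
              · rw [Prod.mk.injEq]; exact ⟨by ring, by omega⟩
              · show (0:ℝ) ≤ a
                have := ht2nn (n - J) (by omega); linarith
              · show a ≤ s + T
                have := ht2le (n - J + 1) (by omega); linarith
              · show n ≤ k + J; omega

/-- the concatenation of two hybrid inputs is a hybrid input. -/
theorem concat_isHybridInput
    {m : ℕ} {E1 E2 : Set (ℝ × ℕ)}
    {υ1 υ2 υ : ℝ × ℕ → EuclideanSpace ℝ (Fin m)}
    (h1 : IsHybridInput υ1 E1) (h2 : IsHybridInput υ2 E2)
    (hcompact : IsCompact E1)
    {T : ℝ} {J : ℕ} (hmax : IsMaxOfDomain E1 T J)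
    (hconcat : IsConcatOf T J E1 E2 υ1 υ2 υ) :
    IsHybridInput υ (ConcatDom T J E1 E2) := by
  have hdom := concat_isHTD h1.1 h2.1 hmax
  refine ⟨hdom, fun j => ?_⟩
  obtain ⟨hTJ, hmax2⟩ := hmax
  obtain ⟨hf1, hf2⟩ := hconcat
  have hT0 : 0 ≤ T := h1.1.1 (T, J) hTJ
  set A : Set ℝ := Slice E1 j with hAdef
  set B : Set ℝ := {r : ℝ | J ≤ j ∧ (r - T, j - J) ∈ E2} with hBdef
  have hslice : Slice (ConcatDom T J E1 E2) j = A ∪ B := concat_slice_eq j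
  have hAclosed : IsClosed A := by
    have : A = (fun r : ℝ => (r, j)) ⁻¹' E1 := rfl
    rw [this]
    exact hcompact.isClosed.preimage (continuous_id.prodMk continuous_const)
  have hAmeas : MeasurableSet A := hAclosed.measurableSet
  have hAsub : A ⊆ Set.Iic T := fun r hr => (hmax2 (r, j) hr).1
  have hBsub : B ⊆ Set.Ici T := fun r hr => by
    have h' : 0 ≤ r - T := h2.1.1 _ hr.2
    simp only [Set.mem_Ici]
    linarith
  have hBsub2 : B ⊆ {r : ℝ | r - T ∈ Slice E2 (j - J)} := fun r hr => hr.2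
  have hBmeas : MeasurableSet B := by
    by_cases hJj : J ≤ j
    · have hBeq : B = (fun r : ℝ => r - T) ⁻¹' Slice E2 (j - J) := by
        ext r
        simp only [hBdef, Set.mem_setOf_eq, Set.mem_preimage, Slice, hJj, true_and]
      rw [hBeq]
      exact (measurable_id.sub measurable_const)
        (htd_slice_ordConnected h2.1 (j - J)).measurableSet
    · have hBeq : B = ∅ := by
        ext r
        simp only [hBdef, Set.mem_setOf_eq, Set.mem_empty_iff_false, iff_false, not_and]
        intro h; exact absurd h hJj
      rw [hBeq]
      exact MeasurableSet.empty
  have hvalA : ∀ r ∈ A, r ≠ T → υ (r, j) = υ1 (r, j) := fun r hr hrT =>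
    hf1 (r, j) hr (fun hc => hrT (congrArg Prod.fst hc))
  have hvalB : ∀ r ∈ B, υ (r, j) = υ2 (r - T, j - J) := by
    intro r hr
    have h' := hf2 (r - T, j - J) hr.2
    dsimp only at h'
    have e1 : r - T + T = r := by ring
    have e2 : j - J + J = j := Nat.sub_add_cancel hr.1
    rw [e1, e2] at h'
    exact h'
  constructor
  · -- Measurability on the slice
    show Measurable ((Slice (ConcatDom T J E1 E2) j).restrict fun t => υ (t, j))
    have hsplit : A ∪ B = (A \ {T}) ∪ ((A ∩ {T}) ∪ B) := by
      rw [← Set.union_assoc, Set.diff_union_inter]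
    rw [hslice, hsplit]
    refine restrictMeas_union (hAmeas.diff (measurableSet_singleton T))
      ((hAmeas.inter (measurableSet_singleton T)).union hBmeas) ?_
      (restrictMeas_union (hAmeas.inter (measurableSet_singleton T)) hBmeas ?_ ?_)
    · refine restrictMeas_congr (f := fun t => υ1 (t, j)) ?_
        (restrictMeas_mono Set.diff_subset (h1.2 j).1)
      intro t ht
      exact (hvalA t ht.1 ht.2).symm
    · exact restrictMeas_subsingleton
        (Set.subsingleton_singleton.anti Set.inter_subset_right) _
    · refine restrictMeas_congr (f := fun t => υ2 (t - T, j - J)) ?_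
        (restrictMeas_mono hBsub2 (restrictMeas_translate T (h2.2 (j - J)).1))
      intro t ht
      exact (hvalB t ht).symm
  · -- Local essential boundedness
    intro r hr
    rw [hslice] at hr ⊢
    rcases lt_trichotomy r T with hlt | heq | hgt
    · rcases hr with hrA | hrB
      · obtain ⟨U1, hU1o, hrU1, c1, hc1, hae1⟩ := (h1.2 j).2 r hrA
        refine ⟨U1 ∩ Set.Iio T, hU1o.inter isOpen_Iio, ⟨hrU1, hlt⟩, c1, hc1, ?_⟩
        filter_upwards [hae1] with t hb hmem
        obtain ⟨⟨htU1, htlt⟩, htAB⟩ := hmem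
        have htA : t ∈ A := by
          rcases htAB with h | h
          · exact h
          · exact absurd (show T ≤ t from hBsub h) (not_le.mpr htlt)
        rw [hvalA t htA (ne_of_lt htlt)]
        exact hb ⟨htU1, htA⟩
      · exact absurd (show T ≤ r from hBsub hrB) (not_le.mpr hlt)
    · subst heq
      have ing1 : ∃ U1 : Set ℝ, IsOpen U1 ∧ r ∈ U1 ∧ ∃ c1 : ℝ, 0 ≤ c1 ∧
          ∀ᵐ t ∂(volume : Measure ℝ), (t ∈ U1 ∩ A ∧ t ≠ r) → ‖υ (t, j)‖ ≤ c1 := by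
        by_cases hTA : r ∈ A
        · obtain ⟨U1, hU1o, hTU1, c1, hc1, hae1⟩ := (h1.2 j).2 r hTA
          refine ⟨U1, hU1o, hTU1, c1, hc1, ?_⟩
          filter_upwards [hae1] with t hb hmem
          obtain ⟨⟨htU, htA⟩, htT⟩ := hmem
          rw [hvalA t htA htT]
          exact hb ⟨htU, htA⟩
        · obtain ⟨ε, hε, hsub⟩ := Metric.isOpen_iff.mp hAclosed.isOpen_compl r hTA
          refine ⟨Metric.ball r ε, Metric.isOpen_ball, Metric.mem_ball_self hε,
            0, le_refl 0, Filter.Eventually.of_forall fun t ht => ?_⟩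
          exact absurd ht.1.2 (hsub ht.1.1)
      have ing2 : ∃ U2 : Set ℝ, IsOpen U2 ∧ r ∈ U2 ∧ ∃ c2 : ℝ, 0 ≤ c2 ∧
          ∀ᵐ t ∂(volume : Measure ℝ), t ∈ U2 ∩ B → ‖υ (t, j)‖ ≤ c2 := by
        by_cases h0 : (0:ℝ) ∈ Slice E2 (j - J)
        · obtain ⟨U2, hU2o, h0U2, c2, hc2, hae2⟩ := (h2.2 (j - J)).2 0 h0
          refine ⟨{t : ℝ | t - r ∈ U2}, hU2o.preimage (continuous_id.sub continuous_const),
            ?_, c2, hc2, ?_⟩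
          · show r - r ∈ U2
            rw [sub_self]; exact h0U2
          · filter_upwards [ae_translate r hae2] with t hb hmem
            obtain ⟨htU, htB⟩ := hmem
            rw [hvalB t htB]
            exact hb ⟨htU, htB.2⟩
        · have hdisj : ∃ U2 : Set ℝ, IsOpen U2 ∧ r ∈ U2 ∧ U2 ∩ B = ∅ := by
            rcases Set.eq_empty_or_nonempty (Slice E2 (j - J)) with hS | ⟨a, ha⟩
            · refine ⟨Set.univ, isOpen_univ, trivial, ?_⟩
              ext t
              simp only [Set.univ_inter, Set.mem_empty_iff_false, iff_false]
              intro htB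
              exact absurd (hBsub2 htB) (by rw [hS]; exact Set.notMem_empty _)
            · obtain ⟨b, hbS, hbmin⟩ := htd_slice_min h2.1 ha
              have hb0 : 0 < b := by
                rcases lt_or_eq_of_le (h2.1.1 _ hbS) with h | h
                · exact h
                · exact absurd (show (0:ℝ) ∈ Slice E2 (j - J) from h ▸ hbS) h0
              refine ⟨Set.Iio (r + b), isOpen_Iio, by simp [hb0], ?_⟩
              ext t
              simp only [Set.mem_inter_iff, Set.mem_Iio, Set.mem_empty_iff_false, iff_false,
                not_and]
              intro htlt htB
              have h1' := hbmin (t - r) (hBsub2 htB)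
              linarith
          obtain ⟨U2, hU2o, hTU2, hU2B⟩ := hdisj
          exact ⟨U2, hU2o, hTU2, 0, le_refl 0, Filter.Eventually.of_forall fun t ht =>
            (Set.eq_empty_iff_forall_notMem.mp hU2B t ht).elim⟩
      obtain ⟨U1, hU1o, hTU1, c1, hc1, hae1⟩ := ing1
      obtain ⟨U2, hU2o, hTU2, c2, hc2, hae2⟩ := ing2
      have haeT : ∀ᵐ t ∂(volume : Measure ℝ), t ≠ r := by
        rw [ae_iff]
        have hset : {t : ℝ | ¬ t ≠ r} = {r} := by ext t; simp
        rw [hset]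
        exact measure_singleton r
      refine ⟨U1 ∩ U2, hU1o.inter hU2o, ⟨hTU1, hTU2⟩, max c1 c2,
        le_trans hc1 (le_max_left _ _), ?_⟩
      filter_upwards [hae1, hae2, haeT] with t hb1 hb2 hbT hmem
      obtain ⟨⟨htU1, htU2⟩, htAB⟩ := hmem
      rcases htAB with htA | htB
      · exact le_trans (hb1 ⟨⟨htU1, htA⟩, hbT⟩) (le_max_left _ _)
      · exact le_trans (hb2 ⟨htU2, htB⟩) (le_max_right _ _)
    · have hrB : r ∈ B := by
        rcases hr with h | h
        · exact absurd (show r ≤ T from hAsub h) (not_le.mpr hgt)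
        · exact h
      obtain ⟨U2, hU2o, hrU2, c2, hc2, hae2⟩ := (h2.2 (j - J)).2 (r - T) hrB.2
      refine ⟨{t : ℝ | t - T ∈ U2} ∩ Set.Ioi T,
        (hU2o.preimage (continuous_id.sub continuous_const)).inter isOpen_Ioi,
        ⟨hrU2, hgt⟩, c2, hc2, ?_⟩
      filter_upwards [ae_translate T hae2] with t hb hmem
      obtain ⟨⟨htU2, htgt⟩, htAB⟩ := hmem
      have htB : t ∈ B := by
        rcases htAB with h | h
        · exact absurd (show t ≤ T from hAsub h) (not_le.mpr htgt)
        · exact h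
      rw [hvalB t htB]
      exact hb ⟨htU2, htB.2⟩
end
end

section
/- Let ψ1 = (φ1,υ1) and ψ2 = (φ2,υ2) be solution pairs to a hybrid system H = (C,f,D,g) with dom ψ1 compact, and suppose ψ2(0,0) ∈ C whenever both I^J_{ψ1} := {t : (t,J) ∈ dom ψ1} and I^0_{ψ2} := {t : (t,0) ∈ dom ψ2} have nonempty interior, where (T,J) = max dom ψ1. Then the concatenation ψ = (φ,υ) = (φ1|φ2, υ1|υ2) satisfies: for each j ∈ ℕ such that I^j_ψ := {t : (t,j) ∈ dom ψ} has nonempty interior, (φ(t,j),υ(t,j)) ∈ C for all t in the interior of I^j_ψ. -/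
open MeasureTheory Set Metric

noncomputable section

lemma slice_concat_eq (T : ℝ) (J : ℕ) (E1 E2 : Set (ℝ × ℕ)) (j : ℕ) :
    Slice (ConcatDom T J E1 E2) j =
      Slice E1 j ∪ {t : ℝ | J ≤ j ∧ (t - T, j - J) ∈ E2} := by
  ext t
  simp only [Slice, ConcatDom, Set.mem_union, Set.mem_setOf_eq, Set.mem_image, Prod.mk.injEq,
    Prod.exists]
  constructor
  · rintro (h | ⟨s, k, hmem, hs, hk⟩)
    · exact Or.inl h
    · have hJ : J ≤ j := by omega
      have h1 : s = t - T := by linarith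
      have h2 : k = j - J := by omega
      subst h1 h2
      exact Or.inr ⟨hJ, hmem⟩
  · rintro (h | ⟨hJ, hmem⟩)
    · exact Or.inl h
    · exact Or.inr ⟨t - T, j - J, hmem, by ring, by omega⟩

lemma interior_sub_preimage (T : ℝ) (S : Set ℝ) :
    interior {t : ℝ | t - T ∈ S} = {t : ℝ | t - T ∈ interior S} := by
  have h := (Homeomorph.subRight T).preimage_interior S
  have h2 : ⇑(Homeomorph.subRight T) ⁻¹' S = {t : ℝ | t - T ∈ S} := rfl
  have h3 : ⇑(Homeomorph.subRight T) ⁻¹' interior S = {t : ℝ | t - T ∈ interior S} := rfl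
  rw [← h2, ← h, h3]

/-- the concatenation of two solution pairs satisfies the flow-set membership
condition on the interior of every slice of its domain. -/
theorem concat_solutionPair_flow_membership
    {n m : ℕ}
    {C D : Set (EuclideanSpace ℝ (Fin n) × EuclideanSpace ℝ (Fin m))}
    {f g : EuclideanSpace ℝ (Fin n) × EuclideanSpace ℝ (Fin m) → EuclideanSpace ℝ (Fin n)}
    {E1 E2 : Set (ℝ × ℕ)}
    {φ1 φ2 φ : ℝ × ℕ → EuclideanSpace ℝ (Fin n)}
    {υ1 υ2 υ : ℝ × ℕ → EuclideanSpace ℝ (Fin m)}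
    (h1 : IsSolutionPair C f D g φ1 υ1 E1)
    (h2 : IsSolutionPair C f D g φ2 υ2 E2)
    (hcompact : IsCompact E1)
    {T : ℝ} {J : ℕ} (hmax : IsMaxOfDomain E1 T J)
    (hC : (interior (Slice E1 J)).Nonempty → (interior (Slice E2 0)).Nonempty →
      (φ2 (0, 0), υ2 (0, 0)) ∈ C)
    (hφ : IsConcatOf T J E1 E2 φ1 φ2 φ)
    (hυ : IsConcatOf T J E1 E2 υ1 υ2 υ) :
    ∀ j : ℕ, (interior (Slice (ConcatDom T J E1 E2) j)).Nonempty →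
      ∀ t ∈ interior (Slice (ConcatDom T J E1 E2) j), (φ (t, j), υ (t, j)) ∈ C := by
  intro j _ t ht
  set B : Set ℝ := {s : ℝ | s - T ∈ Slice E2 (j - J)} with hB
  have hBeq : {s : ℝ | J ≤ j ∧ (s - T, j - J) ∈ E2} = if J ≤ j then B else ∅ := by
    split_ifs with h
    · ext s; simp [hB, Slice, h]
    · ext s; simp [hB, Slice, h]
  have hslice := slice_concat_eq T J E1 E2 j
  -- facts about E2 nonnegativity
  have hE2nonneg : ∀ p ∈ E2, 0 ≤ p.1 := h2.1.1.1
  have hE1max : ∀ p ∈ E1, p.1 ≤ T ∧ p.2 ≤ J := hmax.2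
  -- handle the case where the relevant point comes from E2
  have hfromE2 : ∀ s : ℝ, J ≤ j → s - T ∈ interior (Slice E2 (j - J)) →
      (φ (s, j), υ (s, j)) ∈ C := by
    intro s hJj hs
    have hmem' : s - T ∈ Slice E2 (j - J) := interior_subset hs
    have hmem : (s - T, j - J) ∈ E2 := hmem'
    have hφeq := hφ.2 (s - T, j - J) hmem
    have hυeq := hυ.2 (s - T, j - J) hmem
    simp only at hφeq hυeq
    have harith : s - T + T = s := by ring
    have harith2 : j - J + J = j := by omega
    rw [harith, harith2] at hφeq hυeq
    rw [hφeq, hυeq]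
    exact (h2.2.2.2.1 (j - J) ⟨s - T, hs⟩).1 (s - T) hs
  -- handle the case where the relevant point comes from E1
  have hfromE1 : ∀ s : ℝ, s ∈ interior (Slice E1 j) → (s, j) ≠ (T, J) →
      (φ (s, j), υ (s, j)) ∈ C := by
    intro s hs hne
    have hmem' : s ∈ Slice E1 j := interior_subset hs
    have hmem : (s, j) ∈ E1 := hmem'
    rw [hφ.1 (s, j) hmem hne, hυ.1 (s, j) hmem hne]
    exact (h1.2.2.2.1 j ⟨s, hs⟩).1 s hs
  rcases lt_trichotomy j J with hjJ | hjJ | hjJ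
  · -- j < J : concat slice = Slice E1 j
    have : Slice (ConcatDom T J E1 E2) j = Slice E1 j := by
      rw [hslice, hBeq, if_neg (by omega), Set.union_empty]
    rw [this] at ht
    exact hfromE1 t ht (by simp [Prod.ext_iff]; omega)
  · -- j = J : slice = Slice E1 J ∪ B, with E1-part ≤ T and B-part ≥ T
    subst hjJ
    have hsj : Slice (ConcatDom T j E1 E2) j = Slice E1 j ∪ B := by
      rw [hslice, hBeq, if_pos le_rfl]
    rw [hsj] at ht
    have hA_le : ∀ s ∈ Slice E1 j, s ≤ T := fun s hs => (hE1max (s, j) hs).1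
    have hB_ge : ∀ s ∈ B, T ≤ s := by
      intro s hs
      have := hE2nonneg (s - T, j - j) hs
      simp at this; linarith
    rcases lt_trichotomy t T with htT | htT | htT
    · -- t < T : t ∈ interior (Slice E1 j)
      have : t ∈ interior (Slice E1 j) := by
        refine mem_interior.2 ⟨interior (Slice E1 j ∪ B) ∩ Set.Iio T, ?_,
          (isOpen_interior.inter isOpen_Iio), ⟨ht, htT⟩⟩
        rintro s ⟨hs1, hs2⟩
        rcases interior_subset hs1 with h | h
        · exact h
        · exact absurd (hB_ge s h) (not_le.2 hs2)
      exact hfromE1 t this (by simp [Prod.ext_iff]; intro h; exact absurd h (ne_of_lt htT))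
    · -- t = T : use hC
      subst htT
      obtain ⟨ε, hε, hball⟩ := Metric.mem_nhds_iff.1 (mem_interior_iff_mem_nhds.1 ht)
      have hsub1 : Set.Ioo (t - ε) t ⊆ Slice E1 j := by
        intro s hs
        have : s ∈ Metric.ball t ε := by
          simp [Metric.mem_ball, Real.dist_eq, abs_lt]; constructor <;> [linarith [hs.1]; linarith [hs.2]]
        rcases hball this with h | h
        · exact h
        · exact absurd (hB_ge s h) (not_le.2 hs.2)
      have hsub2 : Set.Ioo t (t + ε) ⊆ B := by
        intro s hs
        have : s ∈ Metric.ball t ε := by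
          simp [Metric.mem_ball, Real.dist_eq, abs_lt]; constructor <;> [linarith [hs.1]; linarith [hs.2]]
        rcases hball this with h | h
        · exact absurd (hA_le s h) (not_le.2 hs.1)
        · exact h
      have hne1 : (interior (Slice E1 j)).Nonempty :=
        ⟨t - ε / 2, interior_mono hsub1 (by rw [interior_Ioo]; constructor <;> linarith)⟩
      have hne2 : (interior (Slice E2 0)).Nonempty := by
        have : t + ε / 2 ∈ interior B :=
          interior_mono hsub2 (by rw [interior_Ioo]; constructor <;> linarith)
        rw [hB, Nat.sub_self, interior_sub_preimage] at this
        exact ⟨t + ε / 2 - t, this⟩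
      have hCmem := hC hne1 hne2
      -- (0,0) ∈ E2
      have h00 : (0, 0) ∈ E2 := by
        have hs : t + ε / 2 ∈ B := hsub2 ⟨by linarith, by linarith⟩
        have hmem2 : (t + ε / 2 - t, 0) ∈ E2 := by
          have := hs; rw [hB] at this; simpa [Slice, Nat.sub_self] using this
        obtain ⟨τ, hτ0, hτ1, hτmono, hτeq⟩ := h2.1.1.2 _ hmem2
        have hmm : ((0 : ℝ), (0 : ℕ)) ∈ E2 ∩ (Set.Icc (0:ℝ) (t + ε / 2 - t, (0:ℕ)).1 ×ˢ {k : ℕ | k ≤ (t + ε / 2 - t, (0:ℕ)).2}) := by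
          rw [hτeq]
          simp only [Set.mem_iUnion, Set.mem_Iic, Set.mem_prod, Set.mem_Icc, Set.mem_singleton_iff]
          exact ⟨0, le_rfl, ⟨by rw [hτ0], by have h := hτmono 0 le_rfl; rwa [hτ0] at h⟩, rfl⟩
        exact hmm.1
      have hφeq := hφ.2 (0, 0) h00
      have hυeq := hυ.2 (0, 0) h00
      simp only [zero_add] at hφeq hυeq
      -- note here t = T
      rw [hφeq, hυeq]
      exact hCmem
    · -- t > T : t ∈ interior B
      have : t ∈ interior B := by
        refine mem_interior.2 ⟨interior (Slice E1 j ∪ B) ∩ Set.Ioi T, ?_,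
          (isOpen_interior.inter isOpen_Ioi), ⟨ht, htT⟩⟩
        rintro s ⟨hs1, hs2⟩
        rcases interior_subset hs1 with h | h
        · exact absurd (hA_le s h) (not_le.2 hs2)
        · exact h
      rw [hB, interior_sub_preimage] at this
      exact hfromE2 t le_rfl this
  · -- j > J : slice = B
    have hA_empty : Slice E1 j = ∅ := by
      ext s; simp only [Slice, Set.mem_setOf_eq, Set.mem_empty_iff_false, iff_false]
      intro h; have := (hE1max (s, j) h).2; omega
    have : Slice (ConcatDom T J E1 E2) j = B := by
      rw [hslice, hBeq, if_pos (by omega), hA_empty, Set.empty_union]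
    rw [this, hB, interior_sub_preimage] at ht
    exact hfromE2 t (by omega) ht
end
end
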